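/- Let η : K → End_F(V) be the F-algebra embedding determined by W, i.e. η_t acts as multiplication by t on W and as multiplication by ι(t) on σ(W), and preserves V = 1 ⊗ V ⊆ V_K. Then for every θ ∈ U* one has η_{√−q}(0, θ) = (q·(θ⌟Θ), 0) in V = U ⊕ U*. -/
import Mathlib


/-!
Setup: `F` a field of characteristic zero, `q ∈ F` with `−q` not a square in `F`,
`K = F(√−q)` (generated over `F` by `s` with `s² = −q`) with nontrivial `F`-automorphism
`ι`; `U` a finite-dimensional `F`-vector space, `V := U × U*`, `V_K := K ⊗[F] V`,
`σ := ι ⊗ id`.  `Θ ∈ ∧²U` is nondegenerate with contraction `c : U* → U` (`ι(c θ) = θ⌟Θ`).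
`W ⊆ V_K` is the graph of the `K`-linear extension of `θ ↦ −s·(c θ)` (the `K`-span of the
vectors `(−s)·(1 ⊗ (c θ, 0)) + 1 ⊗ (0, θ)`), so that `V_K = W ⊕ σ(W)`, and
`η_t ∈ End_F(V_K)` acts as multiplication by `t` on `W` and by `ι(t)` on `σ(W)`
(quantified here by these defining properties).
-/

open scoped TensorProduct

/-- The `ι`-semilinear automorphism `σ := ι ⊗ id_V` of `V_K = K ⊗[F] V`. -/
noncomputable def sigmaMap (F : Type*) [Field F] (K : Type*) [Field K] [Algebra F K]
    (V : Type*) [AddCommGroup V] [Module F V] (ι : K ≃ₐ[F] K) :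
    K ⊗[F] V →ₗ[F] K ⊗[F] V :=
  TensorProduct.map ι.toLinearMap LinearMap.id

/-- The graph `W = {(−s·(θ⌟Θ)_K, θ) : θ ∈ K ⊗ U*} ⊆ V_K` of the `K`-linear extension of
`θ ↦ −s·(c θ)`, realized as the `K`-span of its values on `1 ⊗ U*`. -/
noncomputable def Wgraph (F : Type*) [Field F] (K : Type*) [Field K] [Algebra F K] (s : K)
    (U : Type*) [AddCommGroup U] [Module F U] (c : Module.Dual F U →ₗ[F] U) :
    Submodule K (K ⊗[F] (U × Module.Dual F U)) :=
  Submodule.span K (Set.range fun θ : Module.Dual F U =>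
    (-s) • ((1 : K) ⊗ₜ[F] ((c θ, 0) : U × Module.Dual F U))
      + (1 : K) ⊗ₜ[F] (((0 : U), θ) : U × Module.Dual F U))

/-- for the `F`-algebra embedding `η` determined by `W` (acting as `t` on `W`
and `ι(t)` on `σ(W)`, and preserving `V = 1 ⊗ V`), one has
`η_{√−q}(0, θ) = (q·(θ⌟Θ), 0)` for every `θ ∈ U*`. -/
theorem stmt17 (F : Type*) [Field F] [CharZero F] (q : F) (hq : ∀ x : F, x ^ 2 ≠ -q)
    (K : Type*) [Field K] [Algebra F K] (s : K) (hs : s ^ 2 = algebraMap F K (-q))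
    (hgen : Algebra.adjoin F ({s} : Set K) = ⊤)
    (ι : K ≃ₐ[F] K) (hι : ι ≠ AlgEquiv.refl)
    (U : Type*) [AddCommGroup U] [Module F U] [FiniteDimensional F U]
    (Θ : ExteriorAlgebra F U)
    (hΘ : Θ ∈ (LinearMap.range (ExteriorAlgebra.ι F : U →ₗ[F] ExteriorAlgebra F U)) ^ 2)
    (c : Module.Dual F U →ₗ[F] U)
    (hc : ∀ θ : Module.Dual F U,
      ExteriorAlgebra.ι F (c θ) =
        CliffordAlgebra.contractLeft (Q := (0 : QuadraticForm F U)) θ Θ)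
    (hcnd : Function.Bijective c)
    (η : K → Module.End F (K ⊗[F] (U × Module.Dual F U)))
    (hη1 : ∀ t : K, ∀ x ∈ Wgraph F K s U c, η t x = t • x)
    (hη2 : ∀ t : K, ∀ x ∈ Wgraph F K s U c,
      η t (sigmaMap F K (U × Module.Dual F U) ι x)
        = ι t • sigmaMap F K (U × Module.Dual F U) ι x) :
    ∀ θ : Module.Dual F U,
      η s ((1 : K) ⊗ₜ[F] (((0 : U), θ) : U × Module.Dual F U))
        = (1 : K) ⊗ₜ[F] ((q • c θ, 0) : U × Module.Dual F U) := by
  intro θ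
  -- `ι s = -s`
  have hιs : ι s = -s := by
    have hsq : ι s ^ 2 = s ^ 2 := by
      rw [← map_pow, hs, AlgEquiv.commutes]
    have h2 : (ι s - s) * (ι s + s) = 0 := by linear_combination hsq
    rcases mul_eq_zero.mp h2 with h | h
    · exfalso
      apply hι
      have heq : ι.toAlgHom = AlgHom.id F K :=
        AlgHom.ext_of_adjoin_eq_top hgen (fun x hx => by
          rcases hx with rfl
          simpa using sub_eq_zero.mp h)
      ext x
      simpa using AlgHom.congr_fun heq x
    · exact eq_neg_of_add_eq_zero_left h
  set x := (1 : K) ⊗ₜ[F] ((c θ, 0) : U × Module.Dual F U) with hx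
  set y := (1 : K) ⊗ₜ[F] (((0 : U), θ) : U × Module.Dual F U) with hy
  set w := (-s) • x + y with hw
  have hwW : w ∈ Wgraph F K s U c := Submodule.subset_span ⟨θ, rfl⟩
  have hσw : sigmaMap F K (U × Module.Dual F U) ι w = s • x + y := by
    have h1 : (-s) • x = (-s) ⊗ₜ[F] ((c θ, 0) : U × Module.Dual F U) := by
      rw [hx, TensorProduct.smul_tmul', smul_eq_mul, mul_one]
    have h2 : s • x = s ⊗ₜ[F] ((c θ, 0) : U × Module.Dual F U) := by
      rw [hx, TensorProduct.smul_tmul', smul_eq_mul, mul_one]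
    rw [hw, h1, h2, map_add]
    simp [sigmaMap, hιs, hy]
  have hsum : w + sigmaMap F K (U × Module.Dual F U) ι w = (2 : F) • y := by
    rw [hσw, hw]
    have : ((2 : F) • y) = ((2 : K) • y) := by
      rw [← algebraMap_smul K (2 : F) y, map_ofNat]
    rw [this]
    module
  have hηsum : η s w + η s (sigmaMap F K (U × Module.Dual F U) ι w)
      = (2 : F) • ((algebraMap F K q) • x) := by
    rw [hη1 s w hwW, hη2 s w hwW, hσw, hιs, hw]
    have : ((2 : F) • ((algebraMap F K q) • x)) = ((2 : K) • ((algebraMap F K q) • x)) := by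
      rw [← algebraMap_smul K (2 : F) ((algebraMap F K q) • x), map_ofNat]
    rw [this]
    have hs' : s * s = -(algebraMap F K q) := by
      have := hs
      rw [sq] at this
      rw [this, map_neg]
    match_scalars
    · linear_combination (-2 : K) * hs'
    · ring
  have hfinal : (2 : F) • η s y = (2 : F) • ((algebraMap F K q) • x) := by
    rw [← hηsum, ← map_add, hsum, map_smul]
  have h2ne : (2 : F) ≠ 0 := two_ne_zero
  have := smul_right_injective (K ⊗[F] (U × Module.Dual F U)) h2ne hfinal
  rw [this]
  rw [hx, algebraMap_smul]
  have hprod : ((q • c θ, 0) : U × Module.Dual F U) = q • ((c θ, 0) : U × Module.Dual F U) := by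
    simp [Prod.smul_mk]
  rw [hprod, TensorProduct.tmul_smul]
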